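/- Let α be an uncountable cardinal and let ℤ* denote the set of nonzero integers. Let 𝒜 be the L-structure with universe α × ℤ* and O((x₁,x₂),(y₁,y₂)) iff x₁ = y₁ and x₂·y₂ < 0, and let ℬ be the L-structure with universe ℤ* × α and O((x₁,x₂),(y₁,y₂)) iff x₁ = −y₁. Then 𝒜 and ℬ are both models of SAPP, both have cardinality α, and there is no isomorphism between 𝒜 and ℬ. -/

import Mathlib

open FirstOrder Language Structure BoundedFormula

/-- The relation symbols of the language `L`: a single binary relation `O`. -/
inductive PerpRel : ℕ → Type
  | o : PerpRel 2

/-- The first-order language with a single binary relation symbol `O`. -/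
def L : Language := ⟨fun _ => Empty, PerpRel⟩
  deriving IsRelational

/-- The binary relation symbol `O` of `L`. -/
abbrev oSym : L.Relations 2 := .o

/-- `O(xᵢ, xⱼ)` as a bounded formula. -/
def oBF {n : ℕ} (i j : Fin n) : L.BoundedFormula Empty n :=
  oSym.boundedFormula₂ (&i) (&j)

/-- Finite conjunction of a list of bounded formulas. -/
def andAll {n : ℕ} : List (L.BoundedFormula Empty n) → L.BoundedFormula Empty n
  | [] => ⊤
  | φ :: l => φ ⊓ andAll l

/-- λ₁ₙ : ∀y₁…∀yₙ∀s(O(s,y₁) ∧ … ∧ O(s,yₙ) → ∃t(t ≠ y₁ ∧ … ∧ t ≠ yₙ ∧ O(s,t))).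
Variables: y₁,…,yₙ are de Bruijn indices 0,…,n-1, s is index n, t is index n+1. -/
def lam1 (n : ℕ) : L.Sentence :=
  ((andAll ((List.finRange n).map fun i => oBF (Fin.last n) i.castSucc)).imp
    ((andAll ((List.finRange n).map fun i =>
        ∼((&(Fin.last (n + 1))) =' (&(i.castSucc.castSucc)))) ⊓
      oBF ((Fin.last n).castSucc) (Fin.last (n + 1))).ex)).alls

/-- λ₂ₙ : ∀y₁…∀yₙ∃s(¬O(s,y₁) ∧ … ∧ ¬O(s,yₙ)).
Variables: y₁,…,yₙ are de Bruijn indices 0,…,n-1, s is index n. -/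
def lam2 (n : ℕ) : L.Sentence :=
  ((andAll ((List.finRange n).map fun i => ∼(oBF (Fin.last n) i.castSucc))).ex).alls

/-- λ₃ : ∀x ¬O(x,x). -/
def lam3 : L.Sentence := (∼(oBF (0 : Fin 1) 0)).alls

/-- λ₄ : ∀x∀y(O(x,y) → O(y,x)). -/
def lam4 : L.Sentence := ((oBF (0 : Fin 2) 1).imp (oBF (1 : Fin 2) 0)).alls

/-- λ₅ : ∀x∃y O(x,y). -/
def lam5 : L.Sentence := ((oBF (0 : Fin 2) 1).ex).alls

/-- λ₆ : ∀x∀y∀z∀t(O(x,z) ∧ O(y,z) ∧ O(x,t) → O(y,t)). -/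
def lam6 : L.Sentence :=
  ((oBF (0 : Fin 4) 2 ⊓ oBF (1 : Fin 4) 2 ⊓ oBF (0 : Fin 4) 3).imp (oBF (1 : Fin 4) 3)).alls

/-- The theory SAPP. -/
def SAPP : L.Theory :=
  {φ | ∃ n, 1 ≤ n ∧ φ = lam1 n} ∪ {φ | ∃ n, 2 ≤ n ∧ φ = lam2 n} ∪ {lam3, lam4, lam5, lam6}

universe u

/-- The nonzero integers ℤ*. -/
abbrev ZStar : Type := {z : ℤ // z ≠ 0}

/-- The universe of 𝒜: α × ℤ* (a type of cardinality α times the nonzero integers). -/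
abbrev AType (α : Cardinal.{u}) : Type u := α.out × ULift.{u} ZStar

/-- The universe of ℬ: ℤ* × α. -/
abbrev BType (α : Cardinal.{u}) : Type u := ULift.{u} ZStar × α.out

/-- The structure 𝒜: O((x₁,x₂),(y₁,y₂)) iff x₁ = y₁ and x₂·y₂ < 0. -/
instance (α : Cardinal.{u}) : L.Structure (AType α) where
  RelMap | .o => fun x => (x 0).1 = (x 1).1 ∧ (x 0).2.down.val * (x 1).2.down.val < 0

/-- The structure ℬ: O((x₁,x₂),(y₁,y₂)) iff x₁ = −y₁. -/
instance (α : Cardinal.{u}) : L.Structure (BType α) where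
  RelMap | .o => fun x => (x 0).1.down.val = -((x 1).1.down.val)

/-! ### Auxiliary lemmas -/

section Aux
variable {M : Type*} [L.Structure M]

/-- The binary relation interpreted by a structure. -/
def oRel (x y : M) : Prop := Structure.RelMap oSym ![x, y]

@[simp] lemma realize_oBF {n : ℕ} (i j : Fin n) (v : Empty → M) (xs : Fin n → M) :
    (oBF i j).Realize v xs ↔ oRel (xs i) (xs j) := by
  simp [oBF, oRel]

@[simp] lemma realize_andAll {n : ℕ} (l : List (L.BoundedFormula Empty n))
    (v : Empty → M) (xs : Fin n → M) :
    (andAll l).Realize v xs ↔ ∀ φ ∈ l, φ.Realize v xs := by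
  induction l with
  | nil => simp [andAll]
  | cons φ l ih => simp [andAll, ih]

lemma models_lam3 (h : ∀ x : M, ¬ oRel x x) : lam3.Realize M := by
  simp [lam3, Sentence.Realize, h]

lemma models_lam4 (h : ∀ x y : M, oRel x y → oRel y x) : lam4.Realize M := by
  simp only [lam4, Sentence.Realize, realize_alls, realize_imp, realize_oBF]
  intro xs
  exact h _ _

lemma models_lam5 (h : ∀ x : M, ∃ y, oRel x y) : lam5.Realize M := by
  simp only [lam5, Sentence.Realize, realize_alls, realize_ex, realize_oBF]
  intro xs
  obtain ⟨y, hy⟩ := h (xs 0)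
  exact ⟨y, by simpa [Fin.snoc] using hy⟩

lemma models_lam6 (h : ∀ x y z t : M, oRel x z → oRel y z → oRel x t → oRel y t) :
    lam6.Realize M := by
  simp only [lam6, Sentence.Realize, realize_alls, realize_imp, realize_inf,
    realize_oBF, and_imp]
  intro xs h1 h2 h3
  exact h _ _ _ _ h1 h2 h3

lemma models_lam1 {n : ℕ}
    (h : ∀ (ys : Fin n → M) (s : M), (∀ i, oRel s (ys i)) →
      ∃ t, (∀ i, t ≠ ys i) ∧ oRel s t) : (lam1 n).Realize M := by
  simp only [lam1, Sentence.Realize, realize_alls, realize_imp, realize_ex,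
    realize_inf, realize_andAll, List.mem_map, List.mem_finRange, true_and,
    forall_exists_index, forall_apply_eq_imp_iff, realize_oBF, realize_not,
    Term.realize_var, Sum.elim_inr, BoundedFormula.realize_bdEqual]
  intro xs hs
  obtain ⟨t, ht1, ht2⟩ := h (fun i => xs i.castSucc) (xs (Fin.last n)) hs
  refine ⟨t, fun i => ?_, ?_⟩
  · simpa using ht1 i
  · simpa using ht2

lemma models_lam2 {n : ℕ}
    (h : ∀ (ys : Fin n → M), ∃ s, ∀ i, ¬ oRel s (ys i)) : (lam2 n).Realize M := by
  simp only [lam2, Sentence.Realize, realize_alls, realize_ex, realize_andAll,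
    List.mem_map, List.mem_finRange]
  intro xs
  obtain ⟨s, hs⟩ := h xs
  refine ⟨s, ?_⟩
  rintro φ ⟨i, -, rfl⟩
  simpa using hs i

lemma models_SAPP
    (h1 : ∀ n, (lam1 n).Realize M) (h2 : ∀ n, (lam2 n).Realize M)
    (h3 : lam3.Realize M) (h4 : lam4.Realize M) (h5 : lam5.Realize M)
    (h6 : lam6.Realize M) : M ⊨ SAPP := by
  rw [Theory.model_iff]
  rintro φ ((⟨n, -, rfl⟩ | ⟨n, -, rfl⟩) | (rfl | rfl | rfl | rfl))
  exacts [h1 n, h2 n, h3, h4, h5, h6]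

end Aux

lemma intsign {x y z t : ℤ} (h1 : x * z < 0) (h2 : y * z < 0) (h3 : x * t < 0) :
    y * t < 0 := by
  rw [mul_neg_iff] at *
  rcases h1 with ⟨hx, hz⟩ | ⟨hx, hz⟩ <;> rcases h2 with ⟨hy, hz'⟩ | ⟨hy, hz'⟩ <;>
    rcases h3 with ⟨hx', ht⟩ | ⟨hx', ht⟩ <;>
    first
      | exact Or.inl ⟨by linarith, by linarith⟩
      | exact Or.inr ⟨by linarith, by linarith⟩

lemma mk_ZStar : Cardinal.mk ZStar = Cardinal.aleph0 := by
  haveI : Infinite ZStar := Infinite.of_injective (fun n : ℕ => ⟨(n : ℤ) + 1, by omega⟩)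
    (fun a b h => by
      have := congrArg Subtype.val h
      simpa using this)
  apply le_antisymm
  · exact (Cardinal.mk_subtype_le _).trans_eq Cardinal.mk_int
  · rw [Cardinal.infinite_iff] at *
    exact ‹Cardinal.aleph0 ≤ Cardinal.mk ZStar›

section Structures
variable (α : Cardinal.{u})

lemma oRel_A (x y : AType α) :
    oRel x y ↔ x.1 = y.1 ∧ x.2.down.val * y.2.down.val < 0 := Iff.rfl

lemma oRel_B (x y : BType α) :
    oRel x y ↔ x.1.down.val = -(y.1.down.val) := Iff.rfl

variable (hα : Cardinal.aleph0 < α)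
include hα

lemma infinite_out : Infinite α.out := by
  rw [Cardinal.infinite_iff, Cardinal.mk_out]
  exact hα.le

lemma A_models : AType α ⊨ SAPP := by
  haveI := infinite_out α hα
  refine models_SAPP (fun n => ?_) (fun n => ?_) ?_ ?_ ?_ ?_
  · -- λ₁
    refine models_lam1 fun ys s hs => ?_
    have hs2 : s.2.down.val ≠ 0 := s.2.down.2
    set S : ℤ := 1 + ∑ i : Fin n, |(ys i).2.down.val| with hS
    have hpos : (0:ℤ) < S := by
      have := Finset.sum_nonneg (fun i (_ : i ∈ Finset.univ) =>
        abs_nonneg ((ys i).2.down.val))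
      simp only [hS]
      linarith
    have hsum : ∀ j, |(ys j).2.down.val| < S := by
      intro j
      have := Finset.single_le_sum (f := fun i => |(ys i).2.down.val|)
        (fun i _ => abs_nonneg _) (Finset.mem_univ j)
      simp only [hS]
      linarith
    set k : ℤ := -s.2.down.val * S with hk
    have hkabs : ∀ j, |(ys j).2.down.val| < |k| := by
      intro j
      rw [hk, abs_mul, abs_neg, abs_of_pos hpos]
      have h1 : (1:ℤ) ≤ |s.2.down.val| := Int.one_le_abs hs2
      calc |(ys j).2.down.val| < S := hsum j
        _ ≤ |s.2.down.val| * S := le_mul_of_one_le_left hpos.le h1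
    have hk0 : k ≠ 0 := mul_ne_zero (neg_ne_zero.2 hs2) hpos.ne'
    refine ⟨(s.1, ⟨⟨k, hk0⟩⟩), fun i heq => ?_, ?_⟩
    · have h2 := congrArg (fun p : AType α => p.2.down.val) heq
      simp only at h2
      have := hkabs i
      rw [← h2] at this
      exact lt_irrefl _ this
    · rw [oRel_A]
      refine ⟨rfl, ?_⟩
      show s.2.down.val * k < 0
      have hss : 0 < s.2.down.val * s.2.down.val := mul_self_pos.2 hs2
      rw [hk]
      nlinarith
  · -- λ₂
    refine models_lam2 fun ys => ?_
    classical
    obtain ⟨a, ha⟩ := Infinite.exists_notMem_finset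
      (Finset.image (fun i => (ys i).1) Finset.univ)
    refine ⟨(a, ⟨⟨1, one_ne_zero⟩⟩), fun i h => ?_⟩
    rw [oRel_A] at h
    exact ha (Finset.mem_image.2 ⟨i, Finset.mem_univ i, h.1.symm⟩)
  · -- λ₃
    refine models_lam3 fun x h => ?_
    rw [oRel_A] at h
    exact (mul_self_nonneg _).not_gt h.2
  · -- λ₄
    refine models_lam4 fun x y h => ?_
    rw [oRel_A] at *
    exact ⟨h.1.symm, by rw [mul_comm]; exact h.2⟩
  · -- λ₅
    refine models_lam5 fun x => ?_
    refine ⟨(x.1, ⟨⟨-x.2.down.val, neg_ne_zero.2 x.2.down.2⟩⟩), ?_⟩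
    rw [oRel_A]
    refine ⟨rfl, ?_⟩
    show x.2.down.val * -x.2.down.val < 0
    have := mul_self_pos.2 x.2.down.2
    nlinarith
  · -- λ₆
    refine models_lam6 fun x y z t h1 h2 h3 => ?_
    rw [oRel_A] at *
    exact ⟨h2.1.trans (h1.1.symm.trans h3.1), intsign h1.2 h2.2 h3.2⟩

lemma B_models : BType α ⊨ SAPP := by
  haveI := infinite_out α hα
  refine models_SAPP (fun n => ?_) (fun n => ?_) ?_ ?_ ?_ ?_
  · -- λ₁
    refine models_lam1 fun ys s hs => ?_
    classical
    obtain ⟨a, ha⟩ := Infinite.exists_notMem_finset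
      (Finset.image (fun i => (ys i).2) Finset.univ)
    refine ⟨(⟨⟨-s.1.down.val, neg_ne_zero.2 s.1.down.2⟩⟩, a), fun i heq => ?_, ?_⟩
    · exact ha (Finset.mem_image.2 ⟨i, Finset.mem_univ i,
        (congrArg Prod.snd heq).symm⟩)
    · rw [oRel_B]
      show s.1.down.val = -(-s.1.down.val)
      omega
  · -- λ₂
    refine models_lam2 fun ys => ?_
    set S : ℤ := 1 + ∑ i : Fin n, |(ys i).1.down.val| with hS
    have hpos : (0:ℤ) < S := by
      have := Finset.sum_nonneg (fun i (_ : i ∈ Finset.univ) =>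
        abs_nonneg ((ys i).1.down.val))
      simp only [hS]
      linarith
    have hsum : ∀ j, |(ys j).1.down.val| < S := by
      intro j
      have := Finset.single_le_sum (f := fun i => |(ys i).1.down.val|)
        (fun i _ => abs_nonneg _) (Finset.mem_univ j)
      simp only [hS]
      linarith
    refine ⟨(⟨⟨S, hpos.ne'⟩⟩, Classical.arbitrary _), fun i h => ?_⟩
    rw [oRel_B] at h
    have := hsum i
    have habs : -(ys i).1.down.val ≤ |(ys i).1.down.val| := neg_le_abs _
    simp only at h
    omega
  · -- λ₃
    refine models_lam3 fun x h => ?_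
    rw [oRel_B] at h
    have := x.1.down.2
    omega
  · -- λ₄
    refine models_lam4 fun x y h => ?_
    rw [oRel_B] at *
    omega
  · -- λ₅
    refine models_lam5 fun x => ?_
    refine ⟨(⟨⟨-x.1.down.val, neg_ne_zero.2 x.1.down.2⟩⟩, x.2), ?_⟩
    rw [oRel_B]
    show x.1.down.val = -(-x.1.down.val)
    omega
  · -- λ₆
    refine models_lam6 fun x y z t h1 h2 h3 => ?_
    rw [oRel_B] at *
    omega

end Structures

theorem statement_19' (α : Cardinal.{u}) (hα : Cardinal.aleph0 < α) :
    AType α ⊨ SAPP ∧ BType α ⊨ SAPP ∧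
      Cardinal.mk (AType α) = α ∧ Cardinal.mk (BType α) = α ∧
      IsEmpty (AType α ≃[L] BType α) := by
  haveI := infinite_out α hα
  have hz : Cardinal.mk (ULift.{u} ZStar) = Cardinal.aleph0 := by
    rw [Cardinal.mk_uLift, mk_ZStar, Cardinal.lift_aleph0]
  refine ⟨A_models α hα, B_models α hα, ?_, ?_, ?_⟩
  · rw [Cardinal.mk_prod, Cardinal.lift_id, Cardinal.lift_id, Cardinal.mk_out, hz]
    exact Cardinal.mul_eq_left hα.le hα.le Cardinal.aleph0_ne_zero
  · rw [Cardinal.mk_prod, Cardinal.lift_id, Cardinal.lift_id, Cardinal.mk_out, hz]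
    exact Cardinal.mul_eq_right hα.le hα.le Cardinal.aleph0_ne_zero
  · refine ⟨fun f => absurd ?_ hα.not_ge⟩
    let b : BType α := (⟨⟨1, one_ne_zero⟩⟩, Classical.arbitrary _)
    let ι : α.out → BType α := fun a => (⟨⟨-1, by norm_num⟩⟩, a)
    have hrel : ∀ a, oRel (f.symm b) (f.symm (ι a)) := by
      intro a
      have h0 : oRel b (ι a) := by
        rw [oRel_B]
        norm_num [b, ι]
      have hmr := f.symm.map_rel oSym ![b, ι a]
      have hcomp : (f.symm : BType α → AType α) ∘ ![b, ι a]
          = ![f.symm b, f.symm (ι a)] := by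
        funext i
        fin_cases i <;> rfl
      rw [hcomp] at hmr
      exact hmr.2 h0
    have hinj : Function.Injective (fun a : α.out => (f.symm (ι a)).2) := by
      intro a a' h
      have h1 := (oRel_A α _ _).1 (hrel a)
      have h2 := (oRel_A α _ _).1 (hrel a')
      have heq : f.symm (ι a) = f.symm (ι a') :=
        Prod.ext_iff.2 ⟨h1.1.symm.trans h2.1, h⟩
      have := f.symm.toEquiv.injective (by exact heq)
      simpa [ι, Prod.ext_iff] using this
    calc α = Cardinal.mk α.out := (Cardinal.mk_out α).symm
      _ ≤ Cardinal.mk (ULift.{u} ZStar) := Cardinal.mk_le_of_injective hinj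
      _ = Cardinal.aleph0 := hz

/-- 𝒜 and ℬ are models of SAPP of cardinality α that are not isomorphic. -/
theorem statement_19 (α : Cardinal.{u}) (hα : Cardinal.aleph0 < α) :
    AType α ⊨ SAPP ∧ BType α ⊨ SAPP ∧
      Cardinal.mk (AType α) = α ∧ Cardinal.mk (BType α) = α ∧
      IsEmpty (AType α ≃[L] BType α) := statement_19' α hα
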